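/- Let 0 < p < 1. There exists a constant c_p > 0, depending only on p and λ = sup_k m_k, such that for every N ∈ ℕ and every p-atom a with support contained in I_N (i.e. supp(a) ⊆ I_N, ∫_{I_N} a dμ = 0, and ‖a‖_∞ ≤ μ(I_N)^{−1/p} = M_N^{1/p}), one has ∫_{G_m ∖ I_N} ( sup_{n≥1} |S_n a(x)|/(n+1)^{1/p−1} )^p dμ(x) ≤ c_p. -/

import Mathlib

open MeasureTheory Filter ENNReal Finset

noncomputable section

/-- The Vilenkin group `G_m`: complete direct product of cyclic groups `ℤ_{m_k}`. -/
abbrev Gm (m : ℕ → ℕ) : Type := ∀ k : ℕ, ZMod (m k)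

/-- The generalized powers `M_0 = 1`, `M_{k+1} = m_k M_k`. -/
def Mgen (m : ℕ → ℕ) : ℕ → ℕ
  | 0 => 1
  | k + 1 => m k * Mgen m k

/-- The digits of `n` in the generalized number system `n = Σ_j n_j M_j`. -/
def digit (m : ℕ → ℕ) (n j : ℕ) : ℕ := (n / Mgen m j) % m j

/-- The generalized Rademacher functions `r_k(x) = exp(2πi x_k / m_k)`. -/
def rade (m : ℕ → ℕ) (k : ℕ) (x : Gm m) : ℂ :=
  Complex.exp (2 * Real.pi * Complex.I * ((x k).val : ℂ) / (m k : ℂ))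

/-- The Vilenkin system `ψ_n = Π_k r_k^{n_k}` (all digits `n_k` with `k > n` vanish). -/
def psi (m : ℕ → ℕ) (n : ℕ) (x : Gm m) : ℂ :=
  ∏ k ∈ Finset.range (n + 1), rade m k x ^ digit m n k

/-- The cylinder `I_n(x) = {y : y_0 = x_0, ..., y_{n-1} = x_{n-1}}`. -/
def cyl (m : ℕ → ℕ) (n : ℕ) (x : Gm m) : Set (Gm m) := {y | ∀ j < n, y j = x j}

/-- Vilenkin–Fourier coefficient of an integrable function. -/
def fcoef (m : ℕ → ℕ) (μ : Measure (Gm m)) (f : Gm m → ℂ) (k : ℕ) : ℂ :=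
  ∫ x, f x * (starRingEnd ℂ) (psi m k x) ∂μ

/-- Partial sums of the Vilenkin–Fourier series of a function. -/
def Spart (m : ℕ → ℕ) (μ : Measure (Gm m)) (f : Gm m → ℂ) (n : ℕ) (x : Gm m) : ℂ :=
  ∑ k ∈ Finset.range n, fcoef m μ f k * psi m k x

/-- The Dirichlet kernels `D_n = Σ_{k<n} ψ_k`. -/
def Dker (m : ℕ → ℕ) (n : ℕ) (x : Gm m) : ℂ :=
  ∑ k ∈ Finset.range n, psi m k x

/-- `f = (f^{(n)})` is a martingale w.r.t. the filtration generated by the cylinders: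
each `f^{(n)}` is integrable and, for `n ≤ k`, the conditional expectation of `f^{(k)}`
on the `n`-th σ-algebra (the average on each cylinder `I_n(x)`) equals `f^{(n)}`. -/
def IsVMartingale (m : ℕ → ℕ) (μ : Measure (Gm m)) (f : ℕ → Gm m → ℂ) : Prop :=
  (∀ n, Integrable (f n) μ) ∧
  ∀ n k : ℕ, n ≤ k → ∀ x : Gm m, f n x = (Mgen m n : ℂ) * ∫ t in cyl m n x, f k t ∂μ

/-- Vilenkin–Fourier coefficient of a martingale: `lim_k ∫ f^{(k)} ψ̄_i dμ`; since the
integral is independent of `k` once `M_k > i`, and `M_{i+1} > i`, we take `k = i+1`. -/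
def mfhat (m : ℕ → ℕ) (μ : Measure (Gm m)) (f : ℕ → Gm m → ℂ) (i : ℕ) : ℂ :=
  ∫ x, f (i + 1) x * (starRingEnd ℂ) (psi m i x) ∂μ

/-- The `H_p` (quasi-)norm of a martingale: `‖sup_n |f^{(n)}|‖_{L^p(μ)}`, as an `ℝ≥0∞`. -/
def HpNorm (m : ℕ → ℕ) (μ : Measure (Gm m)) (p : ℝ) (f : ℕ → Gm m → ℂ) : ℝ≥0∞ :=
  (∫⁻ x, (⨆ n, (‖f n x‖₊ : ℝ≥0∞)) ^ p ∂μ) ^ (1 / p)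

variable {m : ℕ → ℕ}

lemma Mgen_pos (h2 : ∀ k, 2 ≤ m k) (k : ℕ) : 0 < Mgen m k := by
  induction k with
  | zero => simp [Mgen]
  | succ k ih => have := h2 k; simp only [Mgen]; exact Nat.mul_pos (by omega) ih

lemma two_pow_le_Mgen (h2 : ∀ k, 2 ≤ m k) (k : ℕ) : 2 ^ k ≤ Mgen m k := by
  induction k with
  | zero => simp [Mgen]
  | succ k ih =>
    have := h2 k
    calc 2 ^ (k+1) = 2 * 2 ^ k := by ring
    _ ≤ m k * Mgen m k := Nat.mul_le_mul this ih
    _ = Mgen m (k+1) := rfl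

lemma lt_Mgen_self (h2 : ∀ k, 2 ≤ m k) (k : ℕ) : k < Mgen m k :=
  lt_of_lt_of_le (Nat.lt_two_pow_self (n := k)) (two_pow_le_Mgen h2 k)

lemma Mgen_dvd (h2 : ∀ k, 2 ≤ m k) {i j : ℕ} (h : i ≤ j) : Mgen m i ∣ Mgen m j := by
  induction j with
  | zero => simpa [Nat.le_zero.mp h]
  | succ j ih =>
    rcases Nat.lt_or_ge i (j+1) with hl | hg
    · exact Dvd.dvd.mul_left (ih (by omega)) _
    · have : i = j + 1 := by omega
      simp [this]

lemma Mgen_mono (h2 : ∀ k, 2 ≤ m k) {i j : ℕ} (h : i ≤ j) : Mgen m i ≤ Mgen m j :=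
  Nat.le_of_dvd (Mgen_pos h2 j) (Mgen_dvd h2 h)

lemma digit_eq_zero_of_lt (h2 : ∀ k, 2 ≤ m k) {n k : ℕ} (h : n < Mgen m k) :
    digit m n k = 0 := by
  simp [digit, Nat.div_eq_of_lt h]

lemma digit_eq_zero_of_dvd (h2 : ∀ k, 2 ≤ m k) {A k : ℕ} (h : Mgen m (k+1) ∣ A) :
    digit m A k = 0 := by
  obtain ⟨d, rfl⟩ := h
  have hpos := Mgen_pos h2 k
  simp only [digit, Mgen]
  rw [show m k * Mgen m k * d = (m k * d) * Mgen m k by ring,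
    Nat.mul_div_cancel _ hpos, Nat.mul_mod_right]

lemma digit_add (h2 : ∀ k, 2 ≤ m k) {K A B : ℕ} (hA : Mgen m K ∣ A) (hB : B < Mgen m K)
    (k : ℕ) : digit m (A + B) k = digit m A k + digit m B k := by
  rcases Nat.lt_or_ge k K with hk | hk
  · -- k < K : digit A k = 0, digit (A+B) k = digit B k
    have hdvd : Mgen m (k+1) ∣ A := (Mgen_dvd h2 (by omega)).trans hA
    rw [digit_eq_zero_of_dvd h2 hdvd, Nat.zero_add]
    obtain ⟨d, rfl⟩ := hdvd
    have hpos := Mgen_pos h2 k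
    simp only [digit, Mgen]
    rw [show m k * Mgen m k * d + B = B + (m k * d) * Mgen m k by ring,
      Nat.add_mul_div_right _ _ hpos, Nat.add_mul_mod_self_left]
  · -- k ≥ K : digit B k = 0, digit (A+B) k = digit A k
    have hKk : Mgen m K ∣ Mgen m k := Mgen_dvd h2 hk
    have hBk : B < Mgen m k := lt_of_lt_of_le hB (Nat.le_of_dvd (Mgen_pos h2 k) hKk)
    rw [digit_eq_zero_of_lt h2 hBk, Nat.add_zero]
    have hpos := Mgen_pos h2 k
    -- show (A+B)/M_k = A/M_k
    have hmod : Mgen m K ∣ A % Mgen m k := (Nat.dvd_mod_iff hKk).mpr hA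
    have hr : A % Mgen m k + B < Mgen m k := by
      rcases Nat.lt_or_ge (A % Mgen m k + B) (Mgen m k) with h | h
      · exact h
      · exfalso
        obtain ⟨e, he⟩ := hmod
        obtain ⟨f, hf⟩ := hKk
        have hlt : A % Mgen m k < Mgen m k := Nat.mod_lt _ hpos
        have hKpos := Mgen_pos h2 K
        have : e < f := by
          by_contra hc
          push_neg at hc
          nlinarith [Nat.mul_le_mul_left (Mgen m K) hc]
        nlinarith [Nat.mul_le_mul_left (Mgen m K) (Nat.succ_le_of_lt this)]
    have : (A + B) / Mgen m k = A / Mgen m k := by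
      conv_lhs => rw [← Nat.div_add_mod A (Mgen m k)]
      rw [Nat.add_assoc, Nat.mul_add_div hpos, Nat.div_eq_of_lt hr, Nat.add_zero]
    simp [digit, this]

lemma digit_mul_Mgen (h2 : ∀ k, 2 ≤ m k) {K u : ℕ} (hu : u < m K) (k : ℕ) :
    digit m (u * Mgen m K) k = if k = K then u else 0 := by
  rcases lt_trichotomy k K with hk | rfl | hk
  · rw [if_neg (by omega)]
    exact digit_eq_zero_of_dvd h2 ((Mgen_dvd h2 (by omega)).trans ⟨u, Nat.mul_comm _ _⟩)
  · rw [if_pos rfl, digit, Nat.mul_div_cancel _ (Mgen_pos h2 k), Nat.mod_eq_of_lt hu]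
  · rw [if_neg (by omega)]
    refine digit_eq_zero_of_lt h2 ?_
    calc u * Mgen m K < m K * Mgen m K :=
          (Nat.mul_lt_mul_right (Mgen_pos h2 K)).mpr hu
    _ = Mgen m (K+1) := rfl
    _ ≤ Mgen m k := Mgen_mono h2 hk

lemma sum_Mgen_le (h2 : ∀ k, 2 ≤ m k) (s : ℕ) :
    ∑ j ∈ Finset.range (s+1), Mgen m j ≤ 2 * Mgen m s := by
  induction s with
  | zero => simp [Mgen]
  | succ s ih =>
    rw [Finset.sum_range_succ]
    have h1 : 2 * Mgen m s ≤ Mgen m (s+1) := by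
      have := h2 s
      calc 2 * Mgen m s ≤ m s * Mgen m s := Nat.mul_le_mul_right _ this
      _ = Mgen m (s+1) := rfl
    omega


/-- helper: exp(2πi j / n) for j : ℕ -/
def eN (n : ℕ) (j : ℕ) : ℂ := Complex.exp (2 * Real.pi * Complex.I * (j : ℂ) / (n : ℂ))

lemma rade_eq_eN (k : ℕ) (x : Gm m) : rade m k x = eN (m k) ((x k).val) := rfl

lemma eN_add (n : ℕ) (j j' : ℕ) : eN n (j + j') = eN n j * eN n j' := by
  simp only [eN, ← Complex.exp_add]
  congr 1
  push_cast
  ring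

lemma eN_mul_self (hn : n ≠ 0) (d : ℕ) : eN n (n * d) = 1 := by
  have : (2 * Real.pi * Complex.I * ((n * d : ℕ) : ℂ) / (n : ℂ)) = (d : ℤ) * (2 * Real.pi * Complex.I) := by
    have : (n : ℂ) ≠ 0 := Nat.cast_ne_zero.mpr hn
    field_simp
    push_cast
    ring
  rw [eN, this, Complex.exp_int_mul_two_pi_mul_I]

lemma eN_mod (hn : n ≠ 0) (j : ℕ) : eN n (j % n) = eN n j := by
  conv_rhs => rw [← Nat.mod_add_div j n]
  rw [eN_add, eN_mul_self hn, mul_one]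

lemma eN_zero (n : ℕ) : eN n 0 = 1 := by simp [eN]

lemma abs_eN (n j : ℕ) : ‖eN n j‖ = 1 := by
  have : (2 * Real.pi * Complex.I * (j : ℂ) / (n : ℂ)) = ((2 * Real.pi * j / n : ℝ) : ℂ) * Complex.I := by
    push_cast; ring
  rw [eN, this, Complex.norm_exp_ofReal_mul_I]

lemma eN_pow (n j u : ℕ) : eN n j ^ u = eN n (j * u) := by
  induction u with
  | zero => simp [eN_zero]
  | succ u ih => rw [pow_succ, ih, ← eN_add, Nat.mul_succ]

lemma eN_ne_one (hj : j % n ≠ 0) (hn : n ≠ 0) : eN n j ≠ 1 := by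
  rw [← eN_mod hn]
  set v := j % n with hv
  have hv0 : 0 < v := Nat.pos_of_ne_zero hj
  have hvn : v < n := Nat.mod_lt _ (Nat.pos_of_ne_zero hn)
  intro h
  rw [eN, Complex.exp_eq_one_iff] at h
  obtain ⟨z, hz⟩ := h
  have hI : (2 * (Real.pi:ℂ) * Complex.I) ≠ 0 := by
    simp [Real.pi_ne_zero, Complex.I_ne_zero]
  have hzc : (v : ℂ) / (n : ℂ) = (z : ℂ) := by
    apply mul_left_cancel₀ hI
    rw [show 2 * (Real.pi:ℂ) * Complex.I * ((v:ℂ)/(n:ℂ)) = 2 * Real.pi * Complex.I * (v:ℂ) / (n:ℂ) by ring, hz]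
    ring
  have hzr : (v : ℝ) / (n : ℝ) = (z : ℝ) := by
    have : (((v:ℝ)/(n:ℝ) : ℝ) : ℂ) = ((z:ℝ) : ℂ) := by push_cast; push_cast at hzc; exact hzc
    exact_mod_cast this
  have hn0 : (0:ℝ) < n := by exact_mod_cast Nat.pos_of_ne_zero hn
  have hlt : (v:ℝ)/(n:ℝ) < 1 := by
    rw [div_lt_one hn0]; exact_mod_cast hvn
  have hgt : (0:ℝ) < (v:ℝ)/(n:ℝ) := by positivity
  rw [hzr] at hlt hgt
  have h1 : 0 < z := by exact_mod_cast hgt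
  have h2 : z < 1 := by exact_mod_cast hlt
  omega

lemma abs_rade (k : ℕ) (x : Gm m) : ‖rade m k x‖ = 1 := by
  rw [rade_eq_eN]; exact abs_eN _ _

lemma rade_pow_eq_one_of_zero (h2 : 2 ≤ m k) (x : Gm m) (h : x k = 0) (d : ℕ) : rade m k x ^ d = 1 := by
  haveI : NeZero (m k) := ⟨by omega⟩
  rw [rade_eq_eN, h, ZMod.val_zero, eN_zero, one_pow]

-- geometric sum
lemma geom_rade_sum (h2 : 2 ≤ m k) (x : Gm m) (h : x k ≠ 0) :
    ∑ w ∈ Finset.range (m k), rade m k x ^ w = 0 := by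
  haveI : NeZero (m k) := ⟨by omega⟩
  have hne : rade m k x ≠ 1 := by
    rw [rade_eq_eN]
    refine eN_ne_one ?_ (by omega)
    rw [Nat.mod_eq_of_lt (ZMod.val_lt _)]
    exact fun hc => h (by rwa [← ZMod.val_eq_zero])
  rw [geom_sum_eq hne]
  have : rade m k x ^ m k = 1 := by
    rw [rade_eq_eN, eN_pow, Nat.mul_comm]
    exact eN_mul_self (by omega) _
  rw [this, sub_self, zero_div]




lemma psi_eq_prod (h2 : ∀ k, 2 ≤ m k) {n K : ℕ} (hK : n + 1 ≤ K) (x : Gm m) :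
    psi m n x = ∏ k ∈ Finset.range K, rade m k x ^ digit m n k := by
  rw [psi]
  apply Finset.prod_subset (Finset.range_subset_range.mpr hK)
  intro k _ hk
  simp only [Finset.mem_range, not_lt] at hk
  have : n < Mgen m k := lt_of_le_of_lt (by omega) (lt_Mgen_self h2 k)
  rw [digit_eq_zero_of_lt h2 this, pow_zero]

lemma abs_psi (n : ℕ) (x : Gm m) : ‖psi m n x‖ = 1 := by
  rw [psi, norm_prod]
  apply Finset.prod_eq_one
  intro k _
  rw [norm_pow, abs_rade, one_pow]

lemma psi_add (h2 : ∀ k, 2 ≤ m k) {K A B : ℕ} (hA : Mgen m K ∣ A) (hB : B < Mgen m K)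
    (x : Gm m) : psi m (A + B) x = psi m A x * psi m B x := by
  set L := A + B + 1 with hL
  rw [psi_eq_prod h2 (le_refl L), psi_eq_prod h2 (show A + 1 ≤ L by omega),
    psi_eq_prod h2 (show B + 1 ≤ L by omega), ← Finset.prod_mul_distrib]
  apply Finset.prod_congr rfl
  intro k _
  rw [digit_add h2 hA hB, pow_add]

lemma psi_mul_Mgen (h2 : ∀ k, 2 ≤ m k) {K u : ℕ} (hu : u < m K) (x : Gm m) :
    psi m (u * Mgen m K) x = rade m K x ^ u := by
  rcases Nat.eq_zero_or_pos u with rfl | hu0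
  · simp [psi, digit]
  · have hKlt : K < u * Mgen m K + 1 := by
      have h1 : K < Mgen m K := lt_Mgen_self h2 K
      have h2' : Mgen m K ≤ u * Mgen m K := Nat.le_mul_of_pos_left _ hu0
      omega
    rw [psi]
    rw [Finset.prod_eq_single K]
    · rw [digit_mul_Mgen h2 hu, if_pos rfl]
    · intro k _ hk
      rw [digit_mul_Mgen h2 hu, if_neg hk, pow_zero]
    · intro h
      exact absurd (Finset.mem_range.mpr hKlt) h

lemma psi_eq_one_on_cyl (h2 : ∀ k, 2 ≤ m k) {N n : ℕ} (hn : n < Mgen m N) {t : Gm m}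
    (ht : t ∈ cyl m N 0) : psi m n t = 1 := by
  rw [psi]
  apply Finset.prod_eq_one
  intro k _
  rcases Nat.lt_or_ge k N with hk | hk
  · exact rade_pow_eq_one_of_zero (h2 k) t (ht k hk) _
  · rw [digit_eq_zero_of_lt h2 (lt_of_lt_of_le hn (Mgen_mono h2 hk)), pow_zero]

-- character property: rade m k (x - t) * rade m k t = rade m k x
lemma rade_sub_mul (h2 : 2 ≤ m k) (x t : Gm m) :
    rade m k (x - t) * rade m k t = rade m k x := by
  haveI : NeZero (m k) := ⟨by omega⟩
  have hsub : (x - t) k = x k - t k := rfl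
  rw [rade_eq_eN, rade_eq_eN, rade_eq_eN, hsub, ← eN_add]
  have hxx : (x k - t k) + t k = x k := by ring
  have hval : ((x k - t k).val + (t k).val) % m k = (x k).val := by
    rw [← ZMod.val_add, hxx]
  rw [← eN_mod (show m k ≠ 0 by omega) ((x k - t k).val + (t k).val), hval]

lemma psi_sub_mul (h2 : ∀ k, 2 ≤ m k) (n : ℕ) (x t : Gm m) :
    psi m n (x - t) * psi m n t = psi m n x := by
  rw [psi, psi, psi, ← Finset.prod_mul_distrib]
  apply Finset.prod_congr rfl
  intro k _
  rw [← mul_pow, rade_sub_mul (h2 k)]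

lemma psi_mul_conj (h2 : ∀ k, 2 ≤ m k) (n : ℕ) (x t : Gm m) :
    psi m n x * (starRingEnd ℂ) (psi m n t) = psi m n (x - t) := by
  rw [← psi_sub_mul h2 n x t, mul_assoc, Complex.mul_conj]
  have : ‖psi m n t‖ = 1 := abs_psi n t
  rw [Complex.normSq_eq_norm_sq, this]
  norm_num

lemma block_sum (h2 : ∀ k, 2 ≤ m k) {K w v : ℕ} (hw : w < m K) (hv : v ≤ Mgen m K)
    (z : Gm m) :
    ∑ i ∈ Finset.range v, psi m (w * Mgen m K + i) z
      = rade m K z ^ w * ∑ i ∈ Finset.range v, psi m i z := by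
  rw [Finset.mul_sum]
  apply Finset.sum_congr rfl
  intro i hi
  rw [psi_add h2 (Dvd.intro_left w rfl) (lt_of_lt_of_le (Finset.mem_range.mp hi) hv),
    psi_mul_Mgen h2 hw]

lemma Dker_mul (h2 : ∀ k, 2 ≤ m k) {K u : ℕ} (hu : u ≤ m K) (z : Gm m) :
    Dker m (u * Mgen m K) z
      = (∑ w ∈ Finset.range u, rade m K z ^ w) * Dker m (Mgen m K) z := by
  induction u with
  | zero => simp [Dker]
  | succ u ih =>
    rw [Dker, show (u+1) * Mgen m K = u * Mgen m K + Mgen m K by ring,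
      Finset.sum_range_add, ← Dker, ih (by omega),
      block_sum h2 (show u < m K by omega) (le_refl _) z, ← Dker,
      Finset.sum_range_succ, add_mul]

lemma Dker_split (h2 : ∀ k, 2 ≤ m k) {K n : ℕ} (hn : n < Mgen m (K+1)) (z : Gm m) :
    Dker m n z
      = (∑ w ∈ Finset.range (n / Mgen m K), rade m K z ^ w) * Dker m (Mgen m K) z
        + rade m K z ^ (n / Mgen m K) * Dker m (n % Mgen m K) z := by
  have hpos := Mgen_pos h2 K
  have hu : n / Mgen m K < m K := by
    rw [Nat.div_lt_iff_lt_mul hpos]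
    calc n < Mgen m (K+1) := hn
    _ = m K * Mgen m K := rfl
    _ = m K * Mgen m K := rfl
  have hv : n % Mgen m K < Mgen m K := Nat.mod_lt n hpos
  have hnd : n = n / Mgen m K * Mgen m K + n % Mgen m K := by
    conv_rhs => rw [Nat.mul_comm]
    exact (Nat.div_add_mod n (Mgen m K)).symm
  conv_lhs => rw [Dker, hnd]
  rw [Finset.sum_range_add, ← Dker, Dker_mul h2 (le_of_lt hu),
    block_sum h2 hu (le_of_lt hv), ← Dker]

lemma Dker_Mgen (h2 : ∀ k, 2 ≤ m k) (K : ℕ) (z : Gm m) :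
    Dker m (Mgen m K) z
      = if (∀ j < K, z j = 0) then ((Mgen m K : ℕ) : ℂ) else 0 := by
  classical
  induction K with
  | zero =>
    rw [if_pos (by omega)]
    simp [Dker, psi, digit, Mgen]
  | succ K ih =>
    have : Dker m (Mgen m (K+1)) z
        = (∑ w ∈ Finset.range (m K), rade m K z ^ w) * Dker m (Mgen m K) z := by
      rw [show Mgen m (K+1) = m K * Mgen m K from rfl]
      exact Dker_mul h2 (le_refl _) z
    rw [this, ih]
    by_cases h : ∀ j < K + 1, z j = 0
    · rw [if_pos h, if_pos (fun j hj => h j (by omega))]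
      have hsum : ∑ w ∈ Finset.range (m K), rade m K z ^ w = (m K : ℂ) := by
        have : ∀ w ∈ Finset.range (m K), rade m K z ^ w = 1 :=
          fun w _ => rade_pow_eq_one_of_zero (h2 K) z (h K (by omega)) w
        rw [Finset.sum_congr rfl this, Finset.sum_const, Finset.card_range]
        simp
      rw [hsum, show Mgen m (K+1) = m K * Mgen m K from rfl]
      push_cast
      ring
    · rw [if_neg h]
      by_cases h' : ∀ j < K, z j = 0
      · rw [if_pos h']
        have hzK : z K ≠ 0 := by
          intro hc
          exact h (fun j hj => by rcases Nat.lt_or_ge j K with h3 | h3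
                                  · exact h' j h3
                                  · have : j = K := by omega
                                    rw [this]; exact hc)
        rw [geom_rade_sum (h2 K) z hzK, zero_mul]
      · rw [if_neg h', mul_zero]

lemma Dker_abs_bound (h2 : ∀ k, 2 ≤ m k) {lam : ℕ} (hlam : ∀ k, m k ≤ lam)
    {s : ℕ} {z : Gm m} (hz : z s ≠ 0) :
    ∀ B n, n < Mgen m B →
      ‖Dker m n z‖
        ≤ (lam : ℝ) * ∑ j ∈ Finset.range (min B (s+1)), (Mgen m j : ℝ) := by
  intro B
  induction B with
  | zero =>
    intro n hn
    have hn0 : n = 0 := by simp [Mgen] at hn; omega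
    subst hn0
    simp [Dker]
  | succ B ih =>
    intro n hn
    rw [Dker_split h2 hn z]
    have habs1 : ‖(∑ w ∈ Finset.range (n / Mgen m B), rade m B z ^ w)
        * Dker m (Mgen m B) z‖
        ≤ (lam : ℝ) * ‖Dker m (Mgen m B) z‖ := by
      rw [norm_mul]
      apply mul_le_mul_of_nonneg_right _ (norm_nonneg _)
      calc ‖∑ w ∈ Finset.range (n / Mgen m B), rade m B z ^ w‖
          ≤ ∑ w ∈ Finset.range (n / Mgen m B), ‖rade m B z ^ w‖ :=
            norm_sum_le _ _
        _ = ∑ w ∈ Finset.range (n / Mgen m B), 1 := by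
            apply Finset.sum_congr rfl; intro w _
            rw [norm_pow, abs_rade, one_pow]
        _ = (n / Mgen m B : ℕ) := by simp
        _ ≤ (lam : ℝ) := by
            have h1 : n / Mgen m B < m B := by
              rw [Nat.div_lt_iff_lt_mul (Mgen_pos h2 B)]
              exact hn
            have := hlam B
            exact_mod_cast le_of_lt (lt_of_lt_of_le h1 this)
    have habs2 : ‖rade m B z ^ (n / Mgen m B) * Dker m (n % Mgen m B) z‖
        = ‖Dker m (n % Mgen m B) z‖ := by
      rw [norm_mul, norm_pow, abs_rade, one_pow, one_mul]
    calc ‖_‖ ≤ ‖(∑ w ∈ Finset.range (n / Mgen m B), rade m B z ^ w)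
            * Dker m (Mgen m B) z‖
          + ‖rade m B z ^ (n / Mgen m B) * Dker m (n % Mgen m B) z‖ :=
        norm_add_le _ _
      _ ≤ (lam : ℝ) * ‖Dker m (Mgen m B) z‖
          + ‖Dker m (n % Mgen m B) z‖ := by
        rw [habs2]; exact add_le_add habs1 le_rfl
      _ ≤ (lam : ℝ) * ∑ j ∈ Finset.range (min (B+1) (s+1)), (Mgen m j : ℝ) := by
        have hIH := ih (n % Mgen m B) (Nat.mod_lt n (Mgen_pos h2 B))
        rcases Nat.lt_or_ge B (s+1) with hBs | hBs
        · -- B ≤ s : min (B+1) (s+1) = B+1, min B (s+1) = B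
          have hm1 : min (B+1) (s+1) = B+1 := by omega
          have hm2 : min B (s+1) = B := by omega
          rw [hm1]
          rw [hm2] at hIH
          have hDM : ‖Dker m (Mgen m B) z‖ ≤ (Mgen m B : ℝ) := by
            rw [Dker_Mgen h2 B z]
            split_ifs
            · simp
            · simp only [norm_zero]
              positivity
          rw [Finset.sum_range_succ, mul_add]
          have hlam0 : (0:ℝ) ≤ (lam:ℝ) := Nat.cast_nonneg _
          calc (lam : ℝ) * ‖Dker m (Mgen m B) z‖
                + ‖Dker m (n % Mgen m B) z‖
              ≤ (lam : ℝ) * (Mgen m B : ℝ)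
                + (lam : ℝ) * ∑ j ∈ Finset.range B, (Mgen m j : ℝ) := by
                exact add_le_add (mul_le_mul_of_nonneg_left hDM hlam0) hIH
            _ = (lam : ℝ) * ∑ j ∈ Finset.range B, (Mgen m j : ℝ)
                + (lam : ℝ) * (Mgen m B : ℝ) := by ring
        · -- B > s : z ∉ I_B since z s ≠ 0, s < B
          have hm1 : min (B+1) (s+1) = s+1 := by omega
          have hm2 : min B (s+1) = s+1 := by omega
          rw [hm1]
          rw [hm2] at hIH
          have hDM : Dker m (Mgen m B) z = 0 := by
            rw [Dker_Mgen h2 B z, if_neg]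
            intro hc
            exact hz (hc s (by omega))
          rw [hDM, norm_zero, mul_zero, zero_add]
          exact hIH

lemma Dker_abs_le (h2 : ∀ k, 2 ≤ m k) {lam : ℕ} (hlam : ∀ k, m k ≤ lam)
    {s : ℕ} {z : Gm m} (hz : z s ≠ 0) (n : ℕ) :
    ‖Dker m n z‖ ≤ 2 * (lam : ℝ) * (Mgen m s : ℝ) := by
  have h1 := Dker_abs_bound h2 hlam hz (n+1) n (lt_Mgen_self h2 (n+1) |>.trans_le' (by omega))
  have h2' : ∑ j ∈ Finset.range (min (n+1) (s+1)), (Mgen m j : ℝ)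
      ≤ ∑ j ∈ Finset.range (s+1), (Mgen m j : ℝ) := by
    apply Finset.sum_le_sum_of_subset_of_nonneg
    · exact Finset.range_subset_range.mpr (by omega)
    · intro j _ _; exact Nat.cast_nonneg _
  have h3 : ∑ j ∈ Finset.range (s+1), (Mgen m j : ℝ) ≤ 2 * (Mgen m s : ℝ) := by
    have := sum_Mgen_le h2 s
    calc ∑ j ∈ Finset.range (s+1), (Mgen m j : ℝ)
        = ((∑ j ∈ Finset.range (s+1), Mgen m j : ℕ) : ℝ) := by push_cast; ring
      _ ≤ ((2 * Mgen m s : ℕ) : ℝ) := by exact_mod_cast this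
      _ = 2 * (Mgen m s : ℝ) := by push_cast; ring
  have hlam0 : (0:ℝ) ≤ (lam:ℝ) := Nat.cast_nonneg _
  calc ‖Dker m n z‖
      ≤ (lam : ℝ) * ∑ j ∈ Finset.range (min (n+1) (s+1)), (Mgen m j : ℝ) := h1
    _ ≤ (lam : ℝ) * (2 * (Mgen m s : ℝ)) :=
        mul_le_mul_of_nonneg_left (h2'.trans h3) hlam0
    _ = 2 * (lam : ℝ) * (Mgen m s : ℝ) := by ring



lemma measurable_rade (k : ℕ) : Measurable (rade m k) :=
  (Measurable.of_discrete (f := fun v : ZMod (m k) =>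
      Complex.exp (2 * Real.pi * Complex.I * (v.val : ℂ) / (m k : ℂ)))).comp
    (measurable_pi_apply k)

lemma measurable_psi (n : ℕ) : Measurable (psi m n) := by
  apply Finset.measurable_prod
  intro k _
  exact (measurable_rade k).pow_const _

lemma measurableSet_cyl (n : ℕ) (x : Gm m) : MeasurableSet (cyl m n x) := by
  have h : cyl m n x = ⋂ j ∈ Finset.range n, (fun y : Gm m => y j) ⁻¹' {x j} := by
    ext y; simp [cyl]
  rw [h]
  exact MeasurableSet.biInter (Finset.range n).countable_toSet
    (fun j _ => (measurable_pi_apply j) (measurableSet_singleton _))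

lemma mem_cyl_zero {N : ℕ} {x : Gm m} : x ∈ cyl m N (0 : Gm m) ↔ ∀ j < N, x j = 0 := by
  simp [cyl]

lemma cyl_zero_univ (x : Gm m) : cyl m 0 x = Set.univ := by
  ext y; simp [cyl]

/-- For `0 < p < 1` there is `c_p > 0`, depending only on `p` and `λ = sup_k m_k`, such
that for every `N` and every `p`-atom `a` supported in `I_N`,
`∫_{G_m ∖ I_N} (sup_{n≥1} |S_n a|/(n+1)^{1/p-1})^p dμ ≤ c_p`. -/
theorem maximal_operator_atom_bound
    (p : ℝ) (hp0 : 0 < p) (hp1 : p < 1) (lam : ℕ) :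
    ∃ c : ℝ, 0 < c ∧
      ∀ (m : ℕ → ℕ), (∀ k, 2 ≤ m k) → (∀ k, m k ≤ lam) →
      ∀ (μ : Measure (Gm m)), (∀ n x, μ (cyl m n x) = ((Mgen m n : ℝ≥0∞))⁻¹) →
      ∀ (N : ℕ) (a : Gm m → ℂ), Measurable a →
        (∀ x ∉ cyl m N 0, a x = 0) →
        (∫ x in cyl m N 0, a x ∂μ) = 0 →
        (∀ x, ‖a x‖ ≤ (Mgen m N : ℝ) ^ (1 / p)) →
        ∫⁻ x in (cyl m N 0)ᶜ,
            (⨆ n : ℕ, ENNReal.ofReal ‖Spart m μ a (n + 1) x‖ /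
              ENNReal.ofReal (((n : ℝ) + 2) ^ (1 / p - 1))) ^ p ∂μ ≤
          ENNReal.ofReal c := by
  classical
  have hγ0 : 0 < 1 / p - 1 := by
    have : 1 < 1 / p := by
      rw [lt_div_iff₀ hp0]; linarith
    linarith
  set q : ℝ := (2:ℝ) ^ (p - 1) with hq
  have hq0 : 0 < q := Real.rpow_pos_of_pos (by norm_num) _
  have hq1 : q < 1 := Real.rpow_lt_one_of_one_lt_of_neg (by norm_num) (by linarith)
  set C : ℝ := (2 * (lam : ℝ)) ^ p with hC
  have hC0 : 0 ≤ C := Real.rpow_nonneg (by positivity) _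
  have h1mq : (0:ℝ) < 1 - q := by linarith
  refine ⟨1 + C * (1 - q)⁻¹,
    add_pos_of_pos_of_nonneg one_pos (mul_nonneg hC0 (inv_nonneg.mpr (le_of_lt h1mq))), ?_⟩
  intro m h2 hlam μ hμ N a ha_meas ha_supp ha_int ha_bound
  haveI : IsProbabilityMeasure μ := by
    constructor
    have h := hμ 0 (0 : Gm m)
    rw [cyl_zero_univ] at h
    simpa [Mgen] using h
  have hMNpos : (0:ℝ) < (Mgen m N : ℝ) := by exact_mod_cast Mgen_pos h2 N
  -- a is integrable
  have ha_int' : Integrable a μ := by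
    refine Integrable.mono' (integrable_const ((Mgen m N : ℝ) ^ (1/p)))
      ha_meas.aestronglyMeasurable ?_
    filter_upwards with t
    simpa using ha_bound t
  -- total integral of a is 0
  have hint_a : ∫ t, a t ∂μ = 0 := by
    rw [← integral_add_compl (measurableSet_cyl N 0) ha_int', ha_int, zero_add]
    apply setIntegral_eq_zero_of_forall_eq_zero
    intro x hx
    exact ha_supp x hx
  -- vanishing Fourier coefficients
  have hfcoef : ∀ k < Mgen m N, fcoef m μ a k = 0 := by
    intro k hk
    have heq : ∀ t, a t * (starRingEnd ℂ) (psi m k t) = a t := by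
      intro t
      by_cases ht : t ∈ cyl m N 0
      · rw [psi_eq_one_on_cyl h2 hk ht, map_one, mul_one]
      · rw [ha_supp t ht, zero_mul]
    rw [fcoef]
    simp_rw [heq]
    exact hint_a
  -- kernel representation
  have hker : ∀ n x, Spart m μ a n x = ∫ t, a t * Dker m n (x - t) ∂μ := by
    intro n x
    rw [Spart]
    have hInt : ∀ k ∈ Finset.range n,
        Integrable (fun t => a t * (starRingEnd ℂ) (psi m k t) * psi m k x) μ := by
      intro k _
      apply Integrable.mul_const
      have : (fun t => a t * (starRingEnd ℂ) (psi m k t))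
          = fun t => ((starRingEnd ℂ) ∘ psi m k) t * a t := by
        funext t; exact mul_comm _ _
      rw [this]
      refine Integrable.bdd_mul (c := 1) ha_int' ?_ (Filter.Eventually.of_forall fun t => ?_)
      · exact (Complex.continuous_conj.measurable.comp (measurable_psi k)).aestronglyMeasurable
      · simp only [Function.comp_apply, Complex.norm_conj]
        rw [abs_psi]
    calc ∑ k ∈ Finset.range n, fcoef m μ a k * psi m k x
        = ∑ k ∈ Finset.range n, ∫ t, a t * (starRingEnd ℂ) (psi m k t) * psi m k x ∂μ := by
          refine Finset.sum_congr rfl fun k _ => ?_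
          rw [fcoef, ← integral_mul_const]
      _ = ∫ t, ∑ k ∈ Finset.range n, a t * (starRingEnd ℂ) (psi m k t) * psi m k x ∂μ :=
          (integral_finset_sum _ hInt).symm
      _ = ∫ t, a t * Dker m n (x - t) ∂μ := by
          refine integral_congr_ae (Filter.Eventually.of_forall fun t => ?_)
          simp only [Dker, Finset.mul_sum]
          refine Finset.sum_congr rfl fun k _ => ?_
          rw [← psi_mul_conj h2 k x t]
          ring
  -- pointwise estimate
  have hSbound : ∀ (s : ℕ), s < N → ∀ (x : Gm m), x s ≠ 0 → ∀ n,
      ‖Spart m μ a n x‖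
        ≤ (2 * (lam:ℝ) * (Mgen m s : ℝ)) * ((Mgen m N : ℝ)^(1/p) * (Mgen m N : ℝ)⁻¹) := by
    intro s hsN x hx n
    rw [hker n x]
    set bound : ℝ := (Mgen m N : ℝ)^(1/p) * (2 * (lam:ℝ) * (Mgen m s : ℝ)) with hbd
    have hg : Integrable ((cyl m N 0).indicator (fun _ => bound)) μ :=
      (integrable_const bound).indicator (measurableSet_cyl N 0)
    have hle : ∀ t, ‖a t * Dker m n (x - t)‖ ≤ (cyl m N 0).indicator (fun _ => bound) t := by
      intro t
      by_cases ht : t ∈ cyl m N 0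
      · rw [Set.indicator_of_mem ht, norm_mul]
        have h1 : ‖a t‖ ≤ (Mgen m N : ℝ)^(1/p) := by
          simpa using ha_bound t
        have hzs : (x - t) s ≠ 0 := by
          have hts : t s = 0 := mem_cyl_zero.mp ht s hsN
          have : (x - t) s = x s - t s := rfl
          rw [this, hts, sub_zero]
          exact hx
        have h2' : ‖Dker m n (x - t)‖ ≤ 2 * (lam:ℝ) * (Mgen m s : ℝ) := by
          simpa using Dker_abs_le h2 hlam hzs n
        exact mul_le_mul h1 h2' (norm_nonneg _) (by positivity)
      · rw [Set.indicator_of_notMem ht, ha_supp t ht, zero_mul, norm_zero]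
    have hkey := norm_integral_le_of_norm_le hg (Filter.Eventually.of_forall hle)
    rw [integral_indicator (measurableSet_cyl N 0), setIntegral_const, measureReal_def, hμ N 0] at hkey
    have htr : (((Mgen m N : ℕ) : ℝ≥0∞)⁻¹).toReal = (Mgen m N : ℝ)⁻¹ := by
      rw [← ENNReal.ofReal_natCast, ← ENNReal.ofReal_inv_of_pos hMNpos,
        ENNReal.toReal_ofReal (by positivity)]
    rw [htr] at hkey
    calc ‖∫ t, a t * Dker m n (x - t) ∂μ‖
        = ‖∫ t, a t * Dker m n (x - t) ∂μ‖ := rfl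
      _ ≤ (Mgen m N : ℝ)⁻¹ • bound := hkey
      _ = (2 * (lam:ℝ) * (Mgen m s : ℝ)) * ((Mgen m N : ℝ)^(1/p) * (Mgen m N : ℝ)⁻¹) := by
          rw [smul_eq_mul, hbd]; ring
  -- low partial sums vanish
  have hSzero : ∀ n, n ≤ Mgen m N → ∀ x, Spart m μ a n x = 0 := by
    intro n hn x
    rw [Spart]
    refine Finset.sum_eq_zero fun k hk => ?_
    rw [hfcoef k (lt_of_lt_of_le (Finset.mem_range.mp hk) hn), zero_mul]
  -- sup bound
  have hsup : ∀ s, s < N → ∀ x : Gm m, x s ≠ 0 →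
      (⨆ n : ℕ, ENNReal.ofReal ‖Spart m μ a (n + 1) x‖ /
        ENNReal.ofReal (((n : ℝ) + 2) ^ (1 / p - 1)))
        ≤ ENNReal.ofReal (2 * (lam:ℝ) * (Mgen m s : ℝ)) := by
    intro s hsN x hx
    refine iSup_le fun n => ?_
    rcases Nat.lt_or_ge n (Mgen m N) with hn | hn
    · rw [hSzero (n+1) (by omega) x]
      simp
    · apply ENNReal.div_le_of_le_mul
      rw [← ENNReal.ofReal_mul (by positivity)]
      apply ENNReal.ofReal_le_ofReal
      have hS := hSbound s hsN x hx (n+1)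
      have e1 : (Mgen m N : ℝ)^(1/p) * (Mgen m N : ℝ)⁻¹ = (Mgen m N : ℝ)^(1/p - 1) := by
        rw [Real.rpow_sub hMNpos, Real.rpow_one]
        field_simp
      have e2 : (Mgen m N:ℝ)^(1/p - 1) ≤ ((n:ℝ)+2)^(1/p - 1) := by
        apply Real.rpow_le_rpow (le_of_lt hMNpos) ?_ (le_of_lt hγ0)
        have : (Mgen m N : ℝ) ≤ (n:ℝ) := by exact_mod_cast hn
        linarith
      calc ‖Spart m μ a (n+1) x‖
          ≤ (2 * (lam:ℝ) * (Mgen m s : ℝ)) * ((Mgen m N : ℝ)^(1/p) * (Mgen m N : ℝ)⁻¹) := hS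
        _ = (2 * (lam:ℝ) * (Mgen m s : ℝ)) * (Mgen m N : ℝ)^(1/p - 1) := by rw [e1]
        _ ≤ (2 * (lam:ℝ) * (Mgen m s : ℝ)) * ((n:ℝ)+2)^(1/p - 1) :=
            mul_le_mul_of_nonneg_left e2 (by positivity)
  -- covering sets
  set Bset : ℕ → Set (Gm m) :=
    fun s => if s < N then (cyl m s 0 \ cyl m (s+1) 0) else ∅ with hBset
  have hcover : (cyl m N 0)ᶜ ⊆ ⋃ s, Bset s := by
    intro x hx
    have hxc : ¬ ∀ j < N, x j = 0 := fun h => hx (mem_cyl_zero.mpr h)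
    have hex : ∃ j, x j ≠ 0 := by
      by_contra h
      push_neg at h
      exact hxc fun j _ => h j
    set s := Nat.find hex with hs
    have hxs : x s ≠ 0 := Nat.find_spec hex
    have hmin : ∀ j < s, x j = 0 := fun j hj => not_not.mp (Nat.find_min hex hj)
    have hsN : s < N := by
      by_contra hcon
      push_neg at hcon
      exact hxc fun j hj => hmin j (lt_of_lt_of_le hj hcon)
    refine Set.mem_iUnion.mpr ⟨s, ?_⟩
    rw [hBset]
    simp only [if_pos hsN]
    refine ⟨mem_cyl_zero.mpr hmin, fun hc => hxs (mem_cyl_zero.mp hc s (by omega))⟩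
  -- assembly
  refine le_trans (lintegral_mono_set hcover) ?_
  refine le_trans (lintegral_iUnion_le Bset _) ?_
  have hterm : ∀ s : ℕ,
      (∫⁻ x in Bset s,
        (⨆ n : ℕ, ENNReal.ofReal ‖Spart m μ a (n + 1) x‖ /
          ENNReal.ofReal (((n : ℝ) + 2) ^ (1 / p - 1))) ^ p ∂μ)
        ≤ ENNReal.ofReal (C * q ^ s) := by
    intro s
    by_cases hsN : s < N
    · have hBs : Bset s = cyl m s 0 \ cyl m (s+1) 0 := by rw [hBset]; simp [hsN]
      have hBmeas : MeasurableSet (Bset s) := by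
        rw [hBs]; exact (measurableSet_cyl s 0).diff (measurableSet_cyl (s+1) 0)
      have hpoint : ∀ x ∈ Bset s,
          (⨆ n : ℕ, ENNReal.ofReal ‖Spart m μ a (n + 1) x‖ /
            ENNReal.ofReal (((n : ℝ) + 2) ^ (1 / p - 1))) ^ p
            ≤ ENNReal.ofReal ((2 * (lam:ℝ) * (Mgen m s : ℝ)) ^ p) := by
        intro x hxB
        rw [hBs] at hxB
        have hxs : x s ≠ 0 := by
          intro hc
          exact hxB.2 (mem_cyl_zero.mpr fun j hj => by
            rcases Nat.lt_or_ge j s with h3 | h3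
            · exact mem_cyl_zero.mp hxB.1 j h3
            · have : j = s := by omega
              rw [this]; exact hc)
        rw [← ENNReal.ofReal_rpow_of_nonneg (by positivity) (le_of_lt hp0)]
        exact ENNReal.rpow_le_rpow (hsup s hsN x hxs) (le_of_lt hp0)
      calc (∫⁻ x in Bset s, _ ∂μ)
          ≤ ∫⁻ _x in Bset s, ENNReal.ofReal ((2 * (lam:ℝ) * (Mgen m s : ℝ)) ^ p) ∂μ :=
            setLIntegral_mono' hBmeas hpoint
        _ = ENNReal.ofReal ((2 * (lam:ℝ) * (Mgen m s : ℝ)) ^ p) * μ (Bset s) :=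
            setLIntegral_const _ _
        _ ≤ ENNReal.ofReal ((2 * (lam:ℝ) * (Mgen m s : ℝ)) ^ p)
              * ENNReal.ofReal ((Mgen m s : ℝ)⁻¹) := by
            apply mul_le_mul_right
            have hb : μ (Bset s) ≤ μ (cyl m s 0) := by
              apply measure_mono
              rw [hBs]
              exact Set.diff_subset
            rw [hμ s 0] at hb
            have hMs : (0:ℝ) < (Mgen m s : ℝ) := by exact_mod_cast Mgen_pos h2 s
            rwa [← ENNReal.ofReal_natCast, ← ENNReal.ofReal_inv_of_pos hMs] at hb
        _ ≤ ENNReal.ofReal (C * q ^ s) := by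
            rw [← ENNReal.ofReal_mul (by positivity)]
            apply ENNReal.ofReal_le_ofReal
            have hMs : (0:ℝ) < (Mgen m s : ℝ) := by exact_mod_cast Mgen_pos h2 s
            have h2s : (2:ℝ)^(s:ℕ) ≤ (Mgen m s : ℝ) := by exact_mod_cast two_pow_le_Mgen h2 s
            have step1 : (2 * (lam:ℝ) * (Mgen m s : ℝ)) ^ p
                = (2 * (lam:ℝ)) ^ p * (Mgen m s : ℝ) ^ p := by
              rw [← Real.mul_rpow (by positivity) (by positivity)]
            have step2 : (Mgen m s : ℝ) ^ p * (Mgen m s : ℝ)⁻¹ = (Mgen m s : ℝ) ^ (p - 1) := by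
              rw [Real.rpow_sub hMs, Real.rpow_one]
              field_simp
            have step3 : (Mgen m s : ℝ) ^ (p - 1) ≤ ((2:ℝ)^(s:ℕ)) ^ (p - 1) :=
              Real.rpow_le_rpow_of_nonpos (by positivity) h2s (by linarith)
            have step4 : ((2:ℝ)^(s:ℕ)) ^ (p - 1) = q ^ s := by
              rw [← Real.rpow_natCast (2:ℝ) s, ← Real.rpow_mul (by norm_num),
                mul_comm, Real.rpow_mul (by norm_num), Real.rpow_natCast]
            calc (2 * (lam:ℝ) * (Mgen m s : ℝ)) ^ p * (Mgen m s : ℝ)⁻¹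
                = (2 * (lam:ℝ)) ^ p * ((Mgen m s : ℝ) ^ p * (Mgen m s : ℝ)⁻¹) := by
                  rw [step1]; ring
              _ = (2 * (lam:ℝ)) ^ p * (Mgen m s : ℝ) ^ (p - 1) := by rw [step2]
              _ ≤ (2 * (lam:ℝ)) ^ p * (((2:ℝ)^(s:ℕ)) ^ (p - 1)) :=
                  mul_le_mul_of_nonneg_left step3 (Real.rpow_nonneg (by positivity) _)
              _ = C * q ^ s := by rw [step4, hC]
    · have hBs : Bset s = ∅ := by rw [hBset]; simp [hsN]
      rw [hBs]
      simp
  refine le_trans (ENNReal.tsum_le_tsum hterm) ?_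
  have hsum : ∑' s : ℕ, ENNReal.ofReal (C * q ^ s)
      = ENNReal.ofReal C * (1 - ENNReal.ofReal q)⁻¹ := by
    have : ∀ s : ℕ, ENNReal.ofReal (C * q ^ s)
        = ENNReal.ofReal C * (ENNReal.ofReal q) ^ s := by
      intro s
      rw [ENNReal.ofReal_mul hC0, ENNReal.ofReal_pow (le_of_lt hq0)]
    simp_rw [this]
    rw [ENNReal.tsum_mul_left, ENNReal.tsum_geometric]
  rw [hsum]
  have h1q : (1 : ℝ≥0∞) - ENNReal.ofReal q = ENNReal.ofReal (1 - q) := by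
    rw [ENNReal.ofReal_sub 1 (le_of_lt hq0), ENNReal.ofReal_one]
  rw [h1q, ← ENNReal.ofReal_inv_of_pos (by linarith), ← ENNReal.ofReal_mul hC0]
  apply ENNReal.ofReal_le_ofReal
  have : 0 < (1 - q)⁻¹ := by positivity
  nlinarith [mul_nonneg hC0 (le_of_lt this)]

end
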